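/- Let σ = θ⁺ > ℵ₀ and suppose μ is a singular cardinal. If a linear order I is strongly (μ,σ)-entangled, then for some μ' < μ, I is strongly (μ',σ)-entangled (and hence this holds for every sufficiently large μ' < μ). -/

import Mathlib

open Cardinal

universe u

/-- `I` is strongly (μ,σ)-entangled (Definition 6.12(1)). -/
def StronglyEntangled (μ σ : Cardinal.{u}) (I : Type u) [LinearOrder I] : Prop :=
  σ + ℵ₀ ≤ #I ∧ σ + ℵ₀ ≤ μ ∧
  ∀ (E : Type u), #E < 1 + σ → ∀ (u : Set E) (t : E → μ.ord.ToType → I),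
    (∀ (α : μ.ord.ToType) (ζ ξ : E), ζ ∈ u → ξ ∉ u → t ζ α ≠ t ξ α) →
    ∃ α β : μ.ord.ToType, α < β ∧
      (∀ e ∈ u, t e α ≤ t e β) ∧ (∀ e ∉ u, t e β ≤ t e α)

set_option linter.unusedSectionVars false
set_option linter.deprecated false

namespace Stmt18

variable {I : Type u} [LinearOrder I]

theorem one_add_eq {σ : Cardinal.{u}} (h : ℵ₀ ≤ σ) : 1 + σ = σ := by
  rw [add_comm]; exact add_eq_left h (le_trans one_le_aleph0 h)


variable {I : Type u} [LinearOrder I]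

/-- Mixed pointwise comparison of rows. -/
def le' {E : Type u} (uu : Set E) (f g : E → I) : Prop :=
  (∀ e ∈ uu, f e ≤ g e) ∧ (∀ e ∉ uu, g e ≤ f e)

/-- A "bad family": a counterexample to the main clause of strong entangledness,
presented as a coherent well-founded family of rows. -/
def Bad (σ lam : Cardinal.{u}) (I : Type u) [LinearOrder I] : Prop :=
  ∃ (E : Type u) (uu : Set E) (X : Type u) (P : X → E → I),
    Cardinal.mk E < 1 + σ ∧ lam ≤ #X ∧ Function.Injective P ∧
    (∀ x, ∀ ζ ∈ uu, ∀ ξ ∉ uu, P x ζ ≠ P x ξ) ∧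
    WellFounded (fun a b : X => le' uu (P b) (P a) ∧ P b ≠ P a)

theorem Bad.mono {σ lam lam' : Cardinal.{u}} (h : Bad σ lam I) (hle : lam' ≤ lam) :
    Bad σ lam' I := by
  obtain ⟨E, uu, X, P, h1, h2, h3⟩ := h
  exact ⟨E, uu, X, P, h1, hle.trans h2, h3⟩

theorem not_entangled_bad {σ lam : Cardinal.{u}} (hI : σ + ℵ₀ ≤ #I) (hlam : σ + ℵ₀ ≤ lam)
    (h : ¬ StronglyEntangled lam σ I) : Bad σ lam I := by
  classical
  have hC : ¬ ∀ (E : Type u), #E < 1 + σ → ∀ (u : Set E) (t : E → lam.ord.ToType → I),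
      (∀ (α : lam.ord.ToType) (ζ ξ : E), ζ ∈ u → ξ ∉ u → t ζ α ≠ t ξ α) →
      ∃ α β : lam.ord.ToType, α < β ∧
        (∀ e ∈ u, t e α ≤ t e β) ∧ (∀ e ∉ u, t e β ≤ t e α) :=
    fun hC => h ⟨hI, hlam, hC⟩
  rw [not_forall] at hC
  obtain ⟨E, hC⟩ := hC
  rw [_root_.not_imp] at hC
  obtain ⟨hE, hC⟩ := hC
  rw [not_forall] at hC
  obtain ⟨u, hC⟩ := hC
  rw [not_forall] at hC
  obtain ⟨t, hC⟩ := hC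
  rw [_root_.not_imp] at hC
  obtain ⟨hval, hno⟩ := hC
  refine ⟨E, u, lam.ord.ToType, fun x e => t e x, hE, ?_, ?_,
    fun x ζ hζ ξ hξ => hval x ζ ξ hζ hξ, ?_⟩
  · rw [mk_toType, card_ord]
  · intro a b hab
    by_contra hne
    have hEq : ∀ e, t e a = t e b := fun e => congrFun hab e
    rcases lt_or_gt_of_ne hne with hlt | hlt
    · exact hno ⟨a, b, hlt, fun e _ => (hEq e).le, fun e _ => (hEq e).ge⟩
    · exact hno ⟨b, a, hlt, fun e _ => (hEq e).ge, fun e _ => (hEq e).le⟩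
  · have hsub : ∀ a b : lam.ord.ToType,
        (le' u (fun e => t e b) (fun e => t e a) ∧ (fun e => t e b) ≠ fun e => t e a) →
          a < b := by
      rintro a b ⟨hle, hne⟩
      rcases lt_trichotomy a b with h | h | h
      · exact h
      · exact absurd (h ▸ rfl) hne
      · exact absurd ⟨b, a, h, fun e he => hle.1 e he, fun e he => hle.2 e he⟩ hno
    exact Subrelation.wf (fun {a b} h => hsub a b h) (IsWellFounded.wf)

theorem bad_not_entangled {σ mu : Cardinal.{u}} (hB : Bad σ mu I)
    (hent : StronglyEntangled mu σ I) : False := by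
  classical
  obtain ⟨E, uu, X, P, hE, hX, hinj, hval, hwf⟩ := hB
  letI : IsWellFounded X (fun a b => le' uu (P b) (P a) ∧ P b ≠ P a) := ⟨hwf⟩
  let rk : X → Ordinal.{u} :=
    IsWellFounded.rank (fun a b : X => le' uu (P b) (P a) ∧ P b ≠ P a)
  let L : Ordinal.{u} × X → Ordinal.{u} × X → Prop := Prod.Lex (· < ·) WellOrderingRel
  let key : X → Ordinal.{u} × X := fun x => (rk x, x)
  have hkeyinj : Function.Injective key := fun a b h => congrArg Prod.snd h
  let emb : (fun a b : X => L (key a) (key b)) ↪r L := ⟨⟨key, hkeyinj⟩, Iff.rfl⟩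
  haveI : IsWellOrder X (fun a b => L (key a) (key b)) := emb.isWellOrder
  have htype : mu.ord ≤ Ordinal.type (fun a b : X => L (key a) (key b)) := by
    rw [Cardinal.ord_le, Ordinal.card_type]
    exact hX
  letI : IsWellOrder mu.ord.ToType (· < ·) := isWellOrder_lt
  have h2 : Ordinal.type (α := mu.ord.ToType) (· < ·) ≤
      Ordinal.type (fun a b : X => L (key a) (key b)) := by
    rw [Ordinal.type_toType]; exact htype
  obtain ⟨f⟩ := Ordinal.type_le_iff'.mp h2
  have hmono : ∀ {α β : mu.ord.ToType}, α < β → rk (f α) ≤ rk (f β) := by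
    intro α β h
    have hrel : L (key (f α)) (key (f β)) := f.map_rel_iff.mpr h
    rcases Prod.lex_iff.mp hrel with h' | ⟨h1, _⟩
    · exact le_of_lt h'
    · exact le_of_eq h1
  obtain ⟨α, β, hab, hA, hB2⟩ := hent.2.2 E hE uu (fun e x => P (f x) e)
    (fun x ζ ξ hζ hξ => hval (f x) ζ hζ ξ hξ)
  by_cases heq : P (f α) = P (f β)
  · exact absurd (f.injective (hinj heq)) (ne_of_lt hab)
  · have hlt : rk (f β) < rk (f α) :=
      IsWellFounded.rank_lt_of_rel ⟨⟨hA, hB2⟩, heq⟩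
    exact absurd (hmono hab) (not_le.mpr hlt)


theorem card_le_theta {σ θ c : Cardinal.{u}} (hσ : σ = Order.succ θ) (hθ : ℵ₀ ≤ θ)
    (h : c < 1 + σ) : c ≤ θ := by
  have hσinf : ℵ₀ ≤ σ := by rw [hσ]; exact hθ.trans (Order.le_succ θ)
  rw [one_add_eq hσinf, hσ] at h
  exact Order.lt_succ_iff.mp h


theorem exists_not_mem {s : Set I} (h : #s < #I) : ∃ a, a ∉ s := by
  by_contra hc
  push_neg at hc
  have hs : s = Set.univ := Set.eq_univ_of_forall hc
  rw [hs, mk_univ] at h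
  exact lt_irrefl _ h


theorem clean {θ σ lam : Cardinal.{u}} (hσ : σ = Order.succ θ) (hθ : ℵ₀ ≤ θ)
    (hB : Bad σ (Order.succ ((2 ^ θ) * lam)) I) (Wu Wd : Set I)
    (hWu : #Wu ≤ θ) (hWd : #Wd ≤ θ) :
    ∃ (E : Type u) (uu : Set E) (X : Type u) (P : X → E → I),
      Cardinal.mk E < 1 + σ ∧ lam ≤ #X ∧ Function.Injective P ∧
      (∀ x, ∀ ζ ∈ uu, ∀ ξ ∉ uu, P x ζ ≠ P x ξ) ∧
      WellFounded (fun a b : X => le' uu (P b) (P a) ∧ P b ≠ P a) ∧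
      (∀ x, (∀ e ∈ uu, P x e ∉ Wd) ∧ (∀ e ∉ uu, P x e ∉ Wu)) := by
  classical
  obtain ⟨E, uu, X, P, hE, hX, hinj, hval, hwf⟩ := hB
  have hEθ : #E ≤ θ := card_le_theta hσ hθ hE
  set W : Set I := Wu ∪ Wd with hWdef
  have qmem : ∀ (x : X) (e : E), ((e ∈ uu ∧ P x e ∈ Wd) ∨ (e ∉ uu ∧ P x e ∈ Wu)) →
      P x e ∈ W := by
    rintro x e (⟨-, h⟩ | ⟨-, h⟩)
    · exact Or.inr h
    · exact Or.inl h
  set q : X → (E → Option W) := fun x e =>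
    if h : (e ∈ uu ∧ P x e ∈ Wd) ∨ (e ∉ uu ∧ P x e ∈ Wu) then
      some ⟨P x e, qmem x e h⟩ else none with hq
  have hcard : ∃ p : E → Option W, lam ≤ #{x // q x = p} := by
    by_contra hcon
    push_neg at hcon
    have h1 : #X ≤ #(E → Option W) * lam := by
      have e1 : #X = Cardinal.sum (fun p : E → Option W => #{x // q x = p}) := by
        rw [← Cardinal.mk_sigma]
        exact Cardinal.mk_congr (Equiv.sigmaFiberEquiv q).symm
      rw [e1, ← Cardinal.sum_const']
      exact Cardinal.sum_le_sum _ _ fun p => (hcon p).le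
    have hOW : #(Option W) ≤ 2 ^ θ := by
      rw [mk_option]
      calc #W + 1 ≤ θ + 1 := by
            refine add_le_add_left ?_ 1
            exact le_trans (mk_union_le Wu Wd) (by
              calc #Wu + #Wd ≤ θ + θ := add_le_add hWu hWd
              _ = θ := add_eq_left hθ le_rfl)
        _ ≤ θ + θ := add_le_add_right (le_trans one_le_aleph0 hθ) θ
        _ = θ := add_eq_left hθ le_rfl
        _ ≤ 2 ^ θ := (cantor θ).le
    have h2 : #(E → Option W) ≤ 2 ^ θ := by
      rw [← Cardinal.power_def]
      calc #(Option W) ^ #E ≤ (2 ^ θ) ^ #E := power_le_power_right hOW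
        _ ≤ (2 ^ θ) ^ θ := by
            apply power_le_power_left _ hEθ
            exact (power_ne_zero θ two_ne_zero)
        _ = 2 ^ (θ * θ) := by rw [← power_mul]
        _ = 2 ^ θ := by rw [mul_eq_self hθ]
    have hlt : (2 ^ θ) * lam < #X := lt_of_lt_of_le (Order.lt_succ _) hX
    have : #X ≤ (2 ^ θ) * lam :=
      h1.trans (mul_le_mul_left h2 lam)
    exact absurd (this.trans_lt hlt) (lt_irrefl _)
  obtain ⟨p, hp⟩ := hcard
  have hPe : ∀ (x : {x // q x = p}) (e : E) (w : W), p e = some w → P x.1 e = (w : I) := by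
    intro x e w h
    have hx : q x.1 e = some w := by rw [x.2, h]
    by_cases hc : (e ∈ uu ∧ P x.1 e ∈ Wd) ∨ (e ∉ uu ∧ P x.1 e ∈ Wu)
    · have h2 : q x.1 e = some ⟨P x.1 e, qmem x.1 e hc⟩ := dif_pos hc
      rw [h2] at hx
      injection hx with hx4
      exact congrArg Subtype.val hx4
    · have h2 : q x.1 e = none := dif_neg hc
      exact absurd (h2.symm.trans hx) (by simp)
  have hNoc : ∀ (x : {x // q x = p}) (e : E), p e = none →
      ¬((e ∈ uu ∧ P x.1 e ∈ Wd) ∨ (e ∉ uu ∧ P x.1 e ∈ Wu)) := by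
    intro x e h hc
    have hx : q x.1 e = none := by rw [x.2, h]
    have h2 : q x.1 e = some ⟨P x.1 e, qmem x.1 e hc⟩ := dif_pos hc
    exact Option.some_ne_none _ (h2.symm.trans hx)
  refine ⟨{e // p e = none}, {e | (e : E) ∈ uu}, {x // q x = p},
    fun x e => P x.1 e.1, lt_of_le_of_lt (mk_subtype_le _) hE, hp, ?_, ?_, ?_, ?_⟩
  · intro a b hab
    apply Subtype.ext
    apply hinj
    funext e
    by_cases he : p e = none
    · exact congrFun hab ⟨e, he⟩
    · obtain ⟨w, hw⟩ := Option.ne_none_iff_exists'.mp he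
      rw [hPe a e w hw, hPe b e w hw]
  · intro x ζ hζ ξ hξ
    exact hval x.1 ζ.1 hζ ξ.1 hξ
  · have hsub : ∀ a b : {x // q x = p},
        (le' {e : {e // p e = none} | (e : E) ∈ uu} (fun e => P b.1 e.1) (fun e => P a.1 e.1) ∧
          (fun e : {e // p e = none} => P b.1 e.1) ≠ fun e => P a.1 e.1) →
        (le' uu (P b.1) (P a.1) ∧ P b.1 ≠ P a.1) := by
      rintro a b ⟨⟨h1, h2⟩, hne⟩
      refine ⟨⟨?_, ?_⟩, ?_⟩
      · intro e he
        by_cases hp' : p e = none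
        · exact h1 ⟨e, hp'⟩ he
        · obtain ⟨w, hw⟩ := Option.ne_none_iff_exists'.mp hp'
          rw [hPe b e w hw, hPe a e w hw]
      · intro e he
        by_cases hp' : p e = none
        · exact h2 ⟨e, hp'⟩ he
        · obtain ⟨w, hw⟩ := Option.ne_none_iff_exists'.mp hp'
          rw [hPe b e w hw, hPe a e w hw]
      · intro hPP
        exact hne (funext fun e => congrFun hPP e.1)
    exact Subrelation.wf (fun {a b} h => hsub a b h)
      (InvImage.wf (fun x : {x // q x = p} => x.1) hwf)
  · intro x
    constructor
    · intro e he hmem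
      exact hNoc x e.1 e.2 (Or.inl ⟨he, hmem⟩)
    · intro e he hmem
      exact hNoc x e.1 e.2 (Or.inr ⟨he, hmem⟩)


theorem ent_two_power_lt {θ σ mu : Cardinal.{u}} (hσ : σ = Order.succ θ) (hθ : ℵ₀ ≤ θ)
    (hent : StronglyEntangled mu σ I) : (2 : Cardinal.{u}) ^ θ < mu := by
  classical
  have hσinf : ℵ₀ ≤ σ := by rw [hσ]; exact hθ.trans (Order.le_succ θ)
  by_contra hle
  rw [not_lt] at hle
  refine bad_not_entangled ?_ hent
  obtain ⟨j₀, j₁, hj⟩ : ∃ j₀ j₁ : I, j₀ < j₁ := by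
    have hIinf : ℵ₀ ≤ #I := le_trans le_add_self hent.1
    have : Nontrivial I := Cardinal.one_lt_iff_nontrivial.mp (one_lt_aleph0.trans_le hIinf)
    obtain ⟨a, b, hab⟩ := exists_pair_ne I
    rcases hab.lt_or_gt with h | h
    · exact ⟨a, b, h⟩
    · exact ⟨b, a, h⟩
  set D := θ.ord.ToType with hD
  set P : (D → Prop) → (D ⊕ D) → I := fun x c => match c with
    | Sum.inl d => if x d then j₁ else j₀
    | Sum.inr d => if x d then j₀ else j₁
    with hP
  have hnocomp : ∀ a b : D → Prop, a ≠ b → ¬ (∀ e, P a e ≤ P b e) := by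
    intro a b hab hcomp
    obtain ⟨d, hd⟩ := Function.ne_iff.mp hab
    by_cases had : a d
    · by_cases hbd : b d
      · exact hd (by simp [had, hbd])
      · have h1 := hcomp (Sum.inl d)
        rw [hP] at h1
        simp only [if_pos had, if_neg hbd] at h1
        exact absurd h1 (not_le.mpr hj)
    · by_cases hbd : b d
      · have h1 := hcomp (Sum.inr d)
        rw [hP] at h1
        simp only [if_neg had, if_pos hbd] at h1
        exact absurd h1 (not_le.mpr hj)
      · exact hd (by simp [had, hbd])
  refine ⟨D ⊕ D, ∅, D → Prop, P, ?_, ?_, ?_, ?_, ?_⟩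
  · rw [one_add_eq hσinf, hσ]
    have h1 : #(D ⊕ D) = #D + #D := by simp [mk_sum, lift_id]
    have hDθ : #D = θ := by rw [hD, mk_toType, card_ord]
    rw [h1, hDθ, add_eq_left hθ le_rfl]
    exact Order.lt_succ θ
  · refine le_trans hle ?_
    rw [mk_arrow]
    have hDθ : #D = θ := by rw [hD, mk_toType, card_ord]
    simp [hDθ, mk_Prop]
  · intro a b hab
    by_contra hne
    exact hnocomp b a (Ne.symm hne) (fun e => le_of_eq (congrFun hab e).symm)
  · intro x ζ hζ ξ hξ
    exact absurd hζ (Set.notMem_empty ζ)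
  · constructor
    intro a
    constructor
    intro y hy
    exfalso
    obtain ⟨⟨h1, h2⟩, hne⟩ := hy
    have hne' : y ≠ a := fun h => hne (by rw [h])
    exact hnocomp y a hne' (fun e => h2 e (Set.notMem_empty e))

set_option maxHeartbeats 1000000 in
theorem combine {θ σ mu : Cardinal.{u}} (hσ : σ = Order.succ θ) (hθ : ℵ₀ ≤ θ)
    (hμinf : ℵ₀ ≤ mu) (hμsing : ¬ mu.IsRegular)
    (hI : σ + ℵ₀ ≤ #I) (h2 : (2 : Cardinal.{u}) ^ θ < mu)
    (hσμ : σ < mu)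
    (hall : ∀ lam : Cardinal.{u}, σ + ℵ₀ ≤ lam → lam < mu → Bad σ lam I) :
    Bad σ mu I := by
  classical
  have hσinf : ℵ₀ ≤ σ := by rw [hσ]; exact hθ.trans (Order.le_succ θ)
  have hσa : σ + ℵ₀ = σ := add_eq_left hσinf hσinf
  have hθσ : θ < σ := by rw [hσ]; exact Order.lt_succ θ
  have hθI : θ < #I := lt_of_lt_of_le hθσ (le_trans (self_le_add_right σ ℵ₀) hI)
  have hone : (1 : Cardinal.{u}) ≤ σ := le_trans one_le_aleph0 hσinf
  -- successor closure below mu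
  have hsucc : ∀ c : Cardinal.{u}, c < mu → Order.succ c < mu := by
    intro c hc
    rcases lt_or_ge (Order.succ c) mu with h | h
    · exact h
    · exfalso
      have hEq : mu = Order.succ c := le_antisymm h (Order.succ_le_of_lt hc)
      rcases le_or_gt ℵ₀ c with hc' | hc'
      · have : (Order.succ c).IsRegular := isRegular_succ hc'
        rw [← hEq] at this
        exact hμsing this
      · have h1 : Order.succ c ≤ ℵ₀ := Order.succ_le_of_lt hc'
        rw [← hEq] at h1
        have : mu = ℵ₀ := le_antisymm h1 hμinf
        rw [this] at hμsing
        exact hμsing isRegular_aleph0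
  -- cofinal structure
  have hκ : mu.ord.cof < mu := by
    rcases lt_or_ge mu.ord.cof mu with h | h
    · exact h
    · exact absurd ⟨hμinf, h⟩ hμsing
  obtain ⟨ι, f, hlsub, hι⟩ := Ordinal.exists_lsub_cof mu.ord
  have hflt : ∀ i, f i < mu.ord := fun i => by
    rw [← hlsub]; exact Ordinal.lt_lsub f i
  have hOlt : ∀ i, Order.succ (f i) < mu.ord := fun i =>
    (Cardinal.isSuccLimit_ord hμinf).succ_lt (hflt i)
  set lam : ι → Cardinal.{u} := fun i => (Order.succ (f i)).card + σ with hlamdef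
  have hlam_lt : ∀ i, lam i < mu := fun i =>
    add_lt_of_lt hμinf (Cardinal.lt_ord.mp (hOlt i)) hσμ
  have hlam_one : ∀ i, 1 ≤ lam i := fun i => le_trans hone (le_add_self)
  -- marker family
  have hcκ1 : σ + ℵ₀ ≤ mu.ord.cof + σ := by
    rw [hσa]; exact le_add_self
  have hcκ2 : mu.ord.cof + σ < mu := add_lt_of_lt hμinf hκ hσμ
  obtain ⟨EM, uM, XM, PM, hEM, hXM, hinjM, hvalM, hwfM⟩ := hall _ hcκ1 hcκ2
  have hιXM : #ι ≤ #XM := by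
    rw [hι]
    exact le_trans (self_le_add_right _ σ) hXM
  obtain ⟨M⟩ := (Cardinal.le_def _ _).mp hιXM
  -- forbidden value sets from the markers
  set Wu : ι → Set I := fun i => PM (M i) '' uM with hWudef
  set Wd : ι → Set I := fun i => PM (M i) '' uMᶜ with hWddef
  have hEMθ : #EM ≤ θ := card_le_theta hσ hθ hEM
  have hWuθ : ∀ i, #(Wu i) ≤ θ := fun i =>
    le_trans (mk_image_le) (le_trans (mk_set_le uM) hEMθ)
  have hWdθ : ∀ i, #(Wd i) ≤ θ := fun i =>
    le_trans (mk_image_le) (le_trans (mk_set_le uMᶜ) hEMθ)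
  -- cleaned blocks
  have hlamhat1 : ∀ i, σ + ℵ₀ ≤ Order.succ ((2 ^ θ) * lam i) := by
    intro i
    rw [hσa]
    calc σ ≤ 2 ^ θ := by rw [hσ]; exact Order.succ_le_of_lt (cantor θ)
      _ = 2 ^ θ * 1 := (mul_one _).symm
      _ ≤ 2 ^ θ * lam i := mul_le_mul_right (hlam_one i) _
      _ ≤ Order.succ _ := Order.le_succ _
  have hlamhat2 : ∀ i, Order.succ ((2 ^ θ) * lam i) < mu := fun i =>
    hsucc _ (mul_lt_of_lt hμinf h2 (hlam_lt i))
  have hclean : ∀ i : ι, ∃ (E : Type u) (uu : Set E) (X : Type u) (P : X → E → I),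
      Cardinal.mk E < 1 + σ ∧ lam i ≤ #X ∧ Function.Injective P ∧
      (∀ x, ∀ ζ ∈ uu, ∀ ξ ∉ uu, P x ζ ≠ P x ξ) ∧
      WellFounded (fun a b : X => le' uu (P b) (P a) ∧ P b ≠ P a) ∧
      (∀ x, (∀ e ∈ uu, P x e ∉ Wd i) ∧ (∀ e ∉ uu, P x e ∉ Wu i)) := fun i =>
    clean hσ hθ (hall _ (hlamhat1 i) (hlamhat2 i)) (Wu i) (Wd i) (hWuθ i) (hWdθ i)
  choose BE Buu BX BP hBE hBX hBinj hBval hBwf hBfree using hclean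
  -- column embeddings
  set D := θ.ord.ToType with hD
  have hemb : ∀ i, Nonempty (BE i ↪ D) := fun i =>
    (Cardinal.le_def _ _).mp (by rw [hD, mk_toType, card_ord]; exact card_le_theta hσ hθ (hBE i))
  have φ : ∀ i, BE i ↪ D := fun i => (hemb i).some
  set ψ : ∀ i, BE i → D ⊕ D := fun i e =>
    if e ∈ Buu i then Sum.inl (φ i e) else Sum.inr (φ i e) with hψdef
  have hψu : ∀ i (e : BE i), e ∈ Buu i → ψ i e = Sum.inl (φ i e) := fun i e h => if_pos h
  have hψd : ∀ i (e : BE i), e ∉ Buu i → ψ i e = Sum.inr (φ i e) := fun i e h => if_neg h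
  have hψinj : ∀ i, Function.Injective (ψ i) := by
    intro i a b hab
    by_cases ha : a ∈ Buu i <;> by_cases hb : b ∈ Buu i
    · rw [hψu i a ha, hψu i b hb] at hab
      exact (φ i).injective (Sum.inl.inj hab)
    · rw [hψu i a ha, hψd i b hb] at hab; exact (Sum.inl_ne_inr hab).elim
    · rw [hψd i a ha, hψu i b hb] at hab; exact (Sum.inr_ne_inl hab).elim
    · rw [hψd i a ha, hψd i b hb] at hab
      exact (φ i).injective (Sum.inr.inj hab)
  have hψinl : ∀ i (e : BE i) d, ψ i e = Sum.inl d → e ∈ Buu i := by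
    intro i e d h
    by_cases hm : e ∈ Buu i
    · exact hm
    · rw [hψd i e hm] at h; exact (Sum.inr_ne_inl h).elim
  have hψinr : ∀ i (e : BE i) d, ψ i e = Sum.inr d → e ∉ Buu i := by
    intro i e d h
    by_cases hm : e ∈ Buu i
    · rw [hψu i e hm] at h; exact (Sum.inl_ne_inr h).elim
    · exact hm
  -- fillers
  set Vals : ∀ i, BX i → Set I := fun i s => Set.range (BP i s) ∪ Set.range (PM (M i))
    with hValsdef
  have hValsθ : ∀ i s, #(Vals i s) ≤ θ := by
    intro i s
    refine le_trans (mk_union_le _ _) ?_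
    have r1 : #(Set.range (BP i s)) ≤ θ := le_trans mk_range_le (card_le_theta hσ hθ (hBE i))
    have r2 : #(Set.range (PM (M i))) ≤ θ := le_trans mk_range_le hEMθ
    calc #(Set.range (BP i s)) + #(Set.range (PM (M i))) ≤ θ + θ := add_le_add r1 r2
      _ = θ := add_eq_left hθ le_rfl
  have hfill : ∀ i (s : BX i), ∃ a b : I, a ∉ Vals i s ∧ b ∉ Vals i s ∧ a ≠ b := by
    intro i s
    obtain ⟨a, ha⟩ := exists_not_mem ((hValsθ i s).trans_lt hθI)
    have hins : #(insert a (Vals i s) : Set I) < #I := by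
      refine lt_of_le_of_lt (mk_insert_le) ?_
      refine lt_of_le_of_lt ?_ hθI
      calc #(Vals i s) + 1 ≤ θ + θ :=
            add_le_add (hValsθ i s) (le_trans one_le_aleph0 hθ)
        _ = θ := add_eq_left hθ le_rfl
    obtain ⟨b, hb⟩ := exists_not_mem hins
    refine ⟨a, b, ha, fun hbV => hb (Set.mem_insert_of_mem a hbV), fun hab => hb ?_⟩
    rw [← hab]; exact Set.mem_insert a _
  choose aF bF haF hbF habF using hfill
  -- the combined family
  set Etot := (EM ⊕ (D ⊕ D)) with hEtot
  set utot : Set Etot := fun c => match c with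
    | Sum.inl e => e ∈ uM
    | Sum.inr (Sum.inl _) => True
    | Sum.inr (Sum.inr _) => False
    with hutotdef
  set Xtot := (Σ i : ι, BX i) with hXtot
  set fill : ∀ i, BX i → (D ⊕ D) → I := fun i s p => match p with
    | Sum.inl _ => aF i s
    | Sum.inr _ => bF i s
    with hfilldef
  set Ptot : Xtot → Etot → I := fun x c => match c with
    | Sum.inl e => PM (M x.1) e
    | Sum.inr p => Function.extend (ψ x.1) (BP x.1 x.2) (fill x.1 x.2) p
    with hPtotdef
  have hPtot_inl : ∀ (i : ι) (s : BX i) (e : EM),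
      Ptot ⟨i, s⟩ (Sum.inl e) = PM (M i) e := fun i s e => rfl
  have hfill1 : ∀ (i : ι) (s : BX i) (d : D), fill i s (Sum.inl d) = aF i s :=
    fun i s d => rfl
  have hfill2 : ∀ (i : ι) (s : BX i) (d : D), fill i s (Sum.inr d) = bF i s :=
    fun i s d => rfl
  have hPtot_mem : ∀ (i : ι) (s : BX i) (e : BE i),
      Ptot ⟨i, s⟩ (Sum.inr (ψ i e)) = BP i s e := fun i s e =>
    (hψinj i).extend_apply _ _ e
  have hPtot_not : ∀ (i : ι) (s : BX i) (p : D ⊕ D), (¬∃ e, ψ i e = p) →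
      Ptot ⟨i, s⟩ (Sum.inr p) = fill i s p := fun i s p h =>
    Function.extend_apply' _ _ _ h
  refine ⟨Etot, utot, Xtot, Ptot, ?_, ?_, ?_, ?_, ?_⟩
  · -- cardinality of columns
    rw [one_add_eq hσinf]
    have hcol : #Etot ≤ θ := by
      rw [hEtot]
      have h1 : #(EM ⊕ (D ⊕ D)) = #EM + (#D + #D) := by
        simp [mk_sum, lift_id]
      rw [h1]
      have hDθ : #D = θ := by rw [hD, mk_toType, card_ord]
      rw [hDθ]
      calc #EM + (θ + θ) ≤ θ + (θ + θ) := add_le_add_left hEMθ _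
        _ = θ := by rw [add_eq_left hθ le_rfl, add_eq_left hθ le_rfl]
    exact lt_of_le_of_lt hcol hθσ
  · -- cardinality of rows
    -- inject mu.ord.ToType into Σ i, (Order.succ (f i)).ToType
    have hstep : ∀ t : mu.ord.ToType,
        ∃ i : ι, ((Ordinal.ToType.mk (o := mu.ord)).symm t : Ordinal) ≤ f i := by
      intro t
      have ht : ((Ordinal.ToType.mk (o := mu.ord)).symm t : Ordinal) < Ordinal.lsub f := by
        rw [hlsub]
        exact ((Ordinal.ToType.mk (o := mu.ord)).symm t).2
      exact Ordinal.lt_lsub_iff.mp ht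
    choose g hg using hstep
    set F : mu.ord.ToType → Σ i : ι, (Order.succ (f i)).ToType := fun t =>
      ⟨g t, Ordinal.ToType.mk
        ⟨((Ordinal.ToType.mk (o := mu.ord)).symm t : Ordinal), Order.lt_succ_iff.mpr (hg t)⟩⟩
      with hF
    have hFinj : Function.Injective F := by
      have hRF : ∀ t, (((Ordinal.ToType.mk (o := Order.succ (f ((F t).1)))).symm (F t).2 :
          Set.Iio _) : Ordinal) = ((Ordinal.ToType.mk (o := mu.ord)).symm t : Ordinal) := by
        intro t
        rw [hF]
        simp
      intro t t' h
      have h2 := hRF t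
      rw [h] at h2
      rw [hRF t'] at h2
      have h3 : (Ordinal.ToType.mk (o := mu.ord)).symm t = (Ordinal.ToType.mk (o := mu.ord)).symm t' :=
        Subtype.ext h2.symm
      exact (Ordinal.ToType.mk (o := mu.ord)).symm.injective h3
    have hmu1 : mu ≤ #(Σ i : ι, (Order.succ (f i)).ToType) := by
      have := mk_le_of_injective hFinj
      rwa [mk_toType, card_ord] at this
    show mu ≤ #(Σ i : ι, BX i)
    calc mu ≤ #(Σ i : ι, (Order.succ (f i)).ToType) := hmu1
      _ = Cardinal.sum (fun i => #((Order.succ (f i)).ToType)) := mk_sigma _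
      _ ≤ Cardinal.sum (fun i => #(BX i)) := Cardinal.sum_le_sum _ _ (fun i => by
          rw [mk_toType]
          exact le_trans (self_le_add_right _ σ) (hBX i))
      _ = #(Σ i : ι, BX i) := (mk_sigma _).symm
  · -- injectivity
    rintro ⟨i, s⟩ ⟨j, t⟩ h
    have hM : PM (M i) = PM (M j) := funext fun e => congrFun h (Sum.inl e)
    have hij : i = j := M.injective (hinjM hM)
    subst hij
    have hst : s = t := by
      refine hBinj i (funext fun e => ?_)
      have h1 := congrFun h (Sum.inr (ψ i e))
      rw [hPtot_mem i s e, hPtot_mem i t e] at h1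
      exact h1
    rw [hst]
  · -- validity
    rintro ⟨i, s⟩ ζ hζ ξ hξ
    rcases ζ with a | p
    · have ha : a ∈ uM := hζ
      rcases ξ with b | p'
      · exact hvalM (M i) a ha b hξ
      · rcases p' with d' | d'
        · exact absurd trivial hξ
        · by_cases hr : ∃ e, ψ i e = Sum.inr d'
          · obtain ⟨e, he⟩ := hr
            have hem : e ∉ Buu i := hψinr i e d' he
            rw [hPtot_inl i s a, ← he, hPtot_mem i s e]
            intro hEq
            exact (hBfree i s).2 e hem ⟨a, ha, hEq⟩
          · rw [hPtot_inl i s a, hPtot_not i s _ hr, hfill2 i s d']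
            intro hEq
            exact hbF i s (Or.inr ⟨a, hEq⟩)
    · rcases p with d | d
      swap
      · exact absurd hζ (fun h => h)
      · rcases ξ with b | p'
        · have hb : b ∉ uM := hξ
          by_cases hr : ∃ e, ψ i e = Sum.inl d
          · obtain ⟨e, he⟩ := hr
            have hem : e ∈ Buu i := hψinl i e d he
            rw [hPtot_inl i s b, ← he, hPtot_mem i s e]
            intro hEq
            exact (hBfree i s).1 e hem ⟨b, hb, hEq.symm⟩
          · rw [hPtot_inl i s b, hPtot_not i s _ hr, hfill1 i s d]
            intro hEq
            exact haF i s (Or.inr ⟨b, hEq.symm⟩)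
        · rcases p' with d' | d'
          · exact absurd trivial hξ
          · by_cases hr : ∃ e, ψ i e = Sum.inl d
            · obtain ⟨e, he⟩ := hr
              have hem : e ∈ Buu i := hψinl i e d he
              by_cases hr' : ∃ e', ψ i e' = Sum.inr d'
              · obtain ⟨e', he'⟩ := hr'
                have hem' : e' ∉ Buu i := hψinr i e' d' he'
                rw [← he, ← he', hPtot_mem i s e, hPtot_mem i s e']
                exact hBval i s e hem e' hem'
              · rw [← he, hPtot_mem i s e, hPtot_not i s _ hr', hfill2 i s d']
                intro hEq
                exact hbF i s (Or.inl ⟨e, hEq⟩)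
            · by_cases hr' : ∃ e', ψ i e' = Sum.inr d'
              · obtain ⟨e', he'⟩ := hr'
                rw [hPtot_not i s _ hr, hfill1 i s d, ← he', hPtot_mem i s e']
                intro hEq
                exact haF i s (Or.inl ⟨e', hEq.symm⟩)
              · rw [hPtot_not i s _ hr, hPtot_not i s _ hr', hfill1 i s d, hfill2 i s d']
                exact habF i s
  · -- well-foundedness
    set measM : Xtot → Ordinal.{u} := fun x => (hwfM.apply (M x.1)).rank with hmeasM
    set measB : Xtot → Ordinal.{u} := fun x => ((hBwf x.1).apply x.2).rank with hmeasB
    set meas : Xtot → (Ordinal.{u} × ι) × Ordinal.{u} := fun x =>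
      ((measM x, x.1), measB x) with hmeas
    set R : ((Ordinal.{u} × ι) × Ordinal.{u}) → ((Ordinal.{u} × ι) × Ordinal.{u}) → Prop :=
      Prod.Lex (Prod.Lex (· < ·) WellOrderingRel) (· < ·) with hR
    have hRwf : WellFounded R := by
      refine WellFounded.prod_lex (WellFounded.prod_lex ?_ ?_) ?_
      · exact wellFounded_lt
      · exact (IsWellFounded.wf : WellFounded (WellOrderingRel : ι → ι → Prop))
      · exact wellFounded_lt
    have hkey : ∀ x y : Xtot,
        (le' utot (Ptot y) (Ptot x) ∧ Ptot y ≠ Ptot x) → R (meas x) (meas y) := by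
      rintro ⟨i, s⟩ ⟨j, t⟩ ⟨⟨hu, hd⟩, hne⟩
      have hM : le' uM (PM (M j)) (PM (M i)) := by
        constructor
        · intro e he
          exact hu (Sum.inl e) he
        · intro e he
          exact hd (Sum.inl e) he
      by_cases hij : i = j
      · subst hij
        have hst : s ≠ t := by
          intro h; exact hne (by rw [h])
        have hblock : le' (Buu i) (BP i t) (BP i s) := by
          constructor
          · intro e he
            have h1 := hu (Sum.inr (ψ i e)) (by rw [hψu i e he]; trivial)
            rwa [hPtot_mem i t e, hPtot_mem i s e] at h1
          · intro e he
            have h1 := hd (Sum.inr (ψ i e)) (by rw [hψd i e he]; exact fun h => h)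
            rwa [hPtot_mem i t e, hPtot_mem i s e] at h1
        have hrank : ((hBwf i).apply s).rank < ((hBwf i).apply t).rank :=
          Acc.rank_lt_of_rel ((hBwf i).apply t)
            ⟨hblock, fun h => hst (hBinj i h).symm⟩
        exact Prod.Lex.right _ hrank
      · have hMne : PM (M j) ≠ PM (M i) := fun h => hij (M.injective (hinjM h)).symm
        have hrank : (hwfM.apply (M i)).rank < (hwfM.apply (M j)).rank :=
          Acc.rank_lt_of_rel (hwfM.apply (M j)) ⟨hM, hMne⟩
        exact Prod.Lex.left _ _ (Prod.Lex.left _ _ hrank)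
    exact Subrelation.wf (fun {x y} h => hkey x y h) (InvImage.wf meas hRwf)


end Stmt18

/-- Proposition 6.21(2): for `σ = θ⁺ > ℵ₀` and `μ` singular, if `I` is
    strongly (μ,σ)-entangled then `I` is strongly (μ',σ)-entangled for some
    `μ' < μ`. -/
theorem stmt_18 (θ σ μ : Cardinal.{u}) (I : Type u) [LinearOrder I]
    (hσ : σ = Order.succ θ) (hσω : ℵ₀ < σ)
    (hμinf : ℵ₀ ≤ μ) (hμsing : ¬μ.IsRegular)
    (hent : StronglyEntangled μ σ I) :
    ∃ μ' < μ, StronglyEntangled μ' σ I := by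
  classical
  by_contra hcon
  push_neg at hcon
  have hθ : ℵ₀ ≤ θ := by
    by_contra hθ'
    push_neg at hθ'
    have hσa : σ ≤ ℵ₀ := by rw [hσ]; exact Order.succ_le_of_lt hθ'
    exact absurd hσω (not_lt.mpr hσa)
  have hσinf : ℵ₀ ≤ σ := hσω.le
  have hσμ : σ < μ := by
    rcases lt_or_ge σ μ with h | h
    · exact h
    · have h1 : σ ≤ μ := le_trans (self_le_add_right σ ℵ₀) hent.2.1
      have h2 : σ = μ := le_antisymm h1 h
      have h3 : σ.IsRegular := by rw [hσ]; exact isRegular_succ hθ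
      rw [h2] at h3
      exact absurd h3 hμsing
  have h2θ : (2 : Cardinal.{u}) ^ θ < μ := Stmt18.ent_two_power_lt hσ hθ hent
  have hall : ∀ lam : Cardinal.{u}, σ + ℵ₀ ≤ lam → lam < μ → Stmt18.Bad σ lam I := by
    intro lam h1 h2
    exact Stmt18.not_entangled_bad hent.1 h1 (hcon lam h2)
  exact Stmt18.bad_not_entangled
    (Stmt18.combine hσ hθ hμinf hμsing hent.1 h2θ hσμ hall) hent
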